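/- With notation as in the solvability criterion: if P·A = G where G is upper triangular with monic diagonal entries whose D-degrees equal exactly the diagonal degrees (h_1,...,h_n) of the Hermite form H of A, and each off-diagonal G_{ij} (i<j) has deg_D G_{ij} < h_j, then G = H and P is unimodular. -/

import Mathlib

/-- Abstract presentation of a skew (Ore/differential) polynomial ring `S = K[D; δ]`:
`S` is a ring containing `K` via `ι`, with a distinguished element `D` satisfying the
commutation rule `D * a = a * D + δ a`, and every element of `S` is (uniquely) a finite
sum `∑ aₙ Dⁿ`, with coefficients `coeff` supported on `supp`. -/
structure DiffPolyRing (K : Type) [CommRing K] (S : Type) [Ring S] (δ : K → K) where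
  ι : K →+* S
  D : S
  comm_rule : ∀ a : K, D * ι a = ι a * D + ι (δ a)
  coeff : S → ℕ → K
  supp : S → Finset ℕ
  mem_supp : ∀ f n, n ∈ supp f ↔ coeff f n ≠ 0
  coeff_add : ∀ f g n, coeff (f + g) n = coeff f n + coeff g n
  coeff_ext : ∀ f g : S, (∀ n, coeff f n = coeff g n) → f = g
  coeff_monomial : ∀ (a : K) (i n : ℕ), coeff (ι a * D ^ i) n = if n = i then a else 0
  repr_sum : ∀ f : S, f = ∑ n ∈ supp f, ι (coeff f n) * D ^ n

namespace DiffPolyRing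

variable {K S : Type} [CommRing K] [Ring S] {δ : K → K}

/-- Degree in the variable `D`, with `degD 0 = ⊥` (i.e. `-∞`). -/
noncomputable def degD (R : DiffPolyRing K S δ) (f : S) : WithBot ℕ := (R.supp f).max

/-- Degree in `D` as a natural number (`0` for the zero polynomial). -/
noncomputable def natDegD (R : DiffPolyRing K S δ) (f : S) : ℕ := (R.degD f).unbotD 0

/-- `f` is monic: its leading coefficient (in `D`) is `1`. -/
noncomputable def Monic (R : DiffPolyRing K S δ) (f : S) : Prop :=
  R.coeff f (R.natDegD f) = 1

/-- `H` is in Hermite form: upper triangular, monic diagonal entries, and each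
off-diagonal entry has `D`-degree strictly less than the diagonal entry below it. -/
noncomputable def HermiteForm (R : DiffPolyRing K S δ) {n : ℕ}
    (H : Matrix (Fin n) (Fin n) S) : Prop :=
  (∀ i j, j < i → H i j = 0) ∧ (∀ i, R.Monic (H i i)) ∧
    (∀ i j, i < j → R.degD (H i j) < R.degD (H j j))

/-- The rows of `A` are left `S`-linearly independent. -/
def FullRowRank {n : ℕ} (A : Matrix (Fin n) (Fin n) S) : Prop :=
  ∀ c : Fin n → S, (∀ j, (∑ i, c i * A i j) = 0) → c = 0

end DiffPolyRing

namespace DiffPolyRing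

variable {K S : Type} [CommRing K] [Ring S] {δ : K → K}

variable (R : DiffPolyRing K S δ)

lemma coeff_zero (n : ℕ) : R.coeff 0 n = 0 := by
  have h := R.coeff_monomial 0 0 n
  rw [map_zero, pow_zero, zero_mul] at h
  rw [h]; split <;> rfl

lemma coeff_neg (f : S) (n : ℕ) : R.coeff (-f) n = - R.coeff f n := by
  have h := R.coeff_add f (-f) n
  rw [add_neg_cancel, R.coeff_zero] at h
  exact (neg_eq_of_add_eq_zero_right h.symm).symm

lemma eq_zero_of_coeff (f : S) (hf : ∀ n, R.coeff f n = 0) : f = 0 :=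
  R.coeff_ext f 0 (fun n => by rw [hf, R.coeff_zero])

lemma le_degD_of_mem {f : S} {n : ℕ} (hn : n ∈ R.supp f) : (n : WithBot ℕ) ≤ R.degD f :=
  Finset.le_max hn

lemma coeff_eq_zero_of_lt {f : S} {n : ℕ} (hf : R.degD f < (n : WithBot ℕ)) :
    R.coeff f n = 0 := by
  by_contra hc
  exact absurd (R.le_degD_of_mem ((R.mem_supp f n).2 hc)) (not_le.2 hf)

lemma degD_le {f : S} {d : WithBot ℕ} (hd : ∀ m, R.coeff f m ≠ 0 → (m : WithBot ℕ) ≤ d) :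
    R.degD f ≤ d :=
  Finset.max_le (fun m hm => hd m ((R.mem_supp f m).1 hm))

lemma degD_eq_bot_iff {f : S} : R.degD f = ⊥ ↔ f = 0 := by
  constructor
  · intro hf
    refine R.eq_zero_of_coeff f (fun n => ?_)
    by_contra hc
    have := R.le_degD_of_mem ((R.mem_supp f n).2 hc)
    simp [hf] at this
  · rintro rfl
    rw [degD, Finset.max_eq_bot, Finset.eq_empty_iff_forall_notMem]
    intro n hn
    exact absurd (R.coeff_zero n) ((R.mem_supp 0 n).1 hn)

lemma degD_ne_bot {f : S} (hf : f ≠ 0) : R.degD f ≠ ⊥ := fun hc => hf (R.degD_eq_bot_iff.1 hc)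

lemma degD_eq_natDegD {f : S} (hf : f ≠ 0) : R.degD f = (R.natDegD f : WithBot ℕ) := by
  obtain ⟨m, hm⟩ := WithBot.ne_bot_iff_exists.1 (R.degD_ne_bot hf)
  rw [natDegD, ← hm]; rfl

lemma natDegD_mem_supp {f : S} (hf : f ≠ 0) : R.natDegD f ∈ R.supp f := by
  have h := R.degD_eq_natDegD hf
  exact Finset.mem_of_max h

lemma leadCoeff_ne_zero {f : S} (hf : f ≠ 0) : R.coeff f (R.natDegD f) ≠ 0 :=
  (R.mem_supp f _).1 (R.natDegD_mem_supp hf)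

lemma le_natDegD_of_mem {f : S} (hf : f ≠ 0) {m : ℕ} (hm : m ∈ R.supp f) :
    m ≤ R.natDegD f := by
  have := R.le_degD_of_mem hm
  rw [R.degD_eq_natDegD hf] at this
  exact_mod_cast this

lemma coeff_sum {α : Type*} (s : Finset α) (f : α → S) (n : ℕ) :
    R.coeff (∑ i ∈ s, f i) n = ∑ i ∈ s, R.coeff (f i) n := by
  classical
  induction s using Finset.induction with
  | empty => simp [R.coeff_zero]
  | insert a s' hx ih =>
                    rw [Finset.sum_insert hx, Finset.sum_insert hx, R.coeff_add, ih]

lemma degD_add_le (f g : S) : R.degD (f + g) ≤ max (R.degD f) (R.degD g) := by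
  refine R.degD_le (fun m hm => ?_)
  rw [R.coeff_add] at hm
  rcases (by by_contra hc; push_neg at hc; rw [hc.1, hc.2, add_zero] at hm; exact hm rfl :
      R.coeff f m ≠ 0 ∨ R.coeff g m ≠ 0) with h | h
  · exact le_max_of_le_left (R.le_degD_of_mem ((R.mem_supp f m).2 h))
  · exact le_max_of_le_right (R.le_degD_of_mem ((R.mem_supp g m).2 h))

lemma degD_sum_le {α : Type*} (s : Finset α) (f : α → S) {d : WithBot ℕ}
    (hd : ∀ i ∈ s, R.degD (f i) ≤ d) : R.degD (∑ i ∈ s, f i) ≤ d := by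
  refine R.degD_le (fun m hm => ?_)
  rw [R.coeff_sum] at hm
  obtain ⟨i, hi, hne⟩ := Finset.exists_ne_zero_of_sum_ne_zero hm
  exact le_trans (R.le_degD_of_mem ((R.mem_supp _ m).2 hne)) (hd i hi)

lemma degD_monomial_le (a : K) (i : ℕ) : R.degD (R.ι a * R.D ^ i) ≤ (i : WithBot ℕ) := by
  refine R.degD_le (fun m hm => ?_)
  rw [R.coeff_monomial] at hm
  by_cases h : m = i
  · subst h; rfl
  · simp [h] at hm

lemma wb_add_lt {x : WithBot ℕ} {i k : ℕ} (hx : x < (i : WithBot ℕ)) :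
    x + (k : WithBot ℕ) < ((i + k : ℕ) : WithBot ℕ) := by
  simp only [Nat.cast_withBot] at *
  cases x with
  | bot => rw [WithBot.bot_add]; exact WithBot.bot_lt_coe _
  | coe m =>
    rw [WithBot.coe_lt_coe] at hx
    rw [← WithBot.coe_add, WithBot.coe_lt_coe]
    omega

lemma wb_add_le {x : WithBot ℕ} {i k : ℕ} (hx : x ≤ (i : WithBot ℕ)) :
    x + (k : WithBot ℕ) ≤ ((i + k : ℕ) : WithBot ℕ) := by
  simp only [Nat.cast_withBot] at *
  cases x with
  | bot => rw [WithBot.bot_add]; exact bot_le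
  | coe m =>
    rw [WithBot.coe_le_coe] at hx
    rw [← WithBot.coe_add, WithBot.coe_le_coe]
    omega

lemma degD_iota_mul_le (a : K) (f : S) : R.degD (R.ι a * f) ≤ R.degD f := by
  have hrepr : R.ι a * f = ∑ n ∈ R.supp f, R.ι (a * R.coeff f n) * R.D ^ n := by
    conv_lhs => rw [R.repr_sum f]
    rw [Finset.mul_sum]
    exact Finset.sum_congr rfl (fun n _ => by rw [map_mul, mul_assoc])
  rw [hrepr]
  exact R.degD_sum_le _ _ (fun n hn =>
    le_trans (R.degD_monomial_le _ n) (R.le_degD_of_mem hn))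

lemma degD_mul_D_pow_le (f : S) (k : ℕ) : R.degD (f * R.D ^ k) ≤ R.degD f + (k : WithBot ℕ) := by
  have hrepr : f * R.D ^ k = ∑ n ∈ R.supp f, R.ι (R.coeff f n) * R.D ^ (n + k) := by
    conv_lhs => rw [R.repr_sum f]
    rw [Finset.sum_mul]
    exact Finset.sum_congr rfl (fun n _ => by rw [pow_add, mul_assoc])
  rw [hrepr]
  refine R.degD_sum_le _ _ (fun n hn => le_trans (R.degD_monomial_le _ _) ?_)
  calc ((n + k : ℕ) : WithBot ℕ) = (n : WithBot ℕ) + (k : WithBot ℕ) := by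
        simp only [Nat.cast_withBot, WithBot.coe_add]
    _ ≤ R.degD f + (k : WithBot ℕ) := by
        refine add_le_add_left ?_ _
        simpa only [Nat.cast_withBot] using R.le_degD_of_mem hn

lemma degD_D_mul_le (f : S) : R.degD (R.D * f) ≤ R.degD f + (1 : ℕ) := by
  have hrepr : R.D * f = ∑ n ∈ R.supp f,
      (R.ι (R.coeff f n) * R.D ^ (n + 1) + R.ι (δ (R.coeff f n)) * R.D ^ n) := by
    conv_lhs => rw [R.repr_sum f]
    rw [Finset.mul_sum]
    refine Finset.sum_congr rfl (fun n _ => ?_)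
    rw [← mul_assoc, R.comm_rule, add_mul, mul_assoc, ← pow_succ']
  rw [hrepr]
  refine R.degD_sum_le _ _ (fun n hn => le_trans (R.degD_add_le _ _) (max_le ?_ ?_))
  · refine le_trans (R.degD_monomial_le _ _) ?_
    have h1 : ((n + 1 : ℕ) : WithBot ℕ) ≤ R.degD f + ((1:ℕ) : WithBot ℕ) := by
      calc ((n + 1 : ℕ) : WithBot ℕ) = (n : WithBot ℕ) + ((1:ℕ) : WithBot ℕ) := by
            simp only [Nat.cast_withBot, WithBot.coe_add]
        _ ≤ _ := add_le_add_left (by simpa only [Nat.cast_withBot] using R.le_degD_of_mem hn) _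
    exact h1
  · refine le_trans (R.degD_monomial_le _ _)
      (le_trans (by simpa only [Nat.cast_withBot] using R.le_degD_of_mem hn) ?_)
    nth_rewrite 1 [← add_zero (R.degD f)]
    exact add_le_add_right
      (show ((0:ℕ):WithBot ℕ) ≤ ((1:ℕ):WithBot ℕ) from by
        simp only [Nat.cast_withBot]; exact WithBot.coe_le_coe.2 (Nat.zero_le 1)) _

lemma wb_coe_add_le {x y : WithBot ℕ} {m k : ℕ} (hm : (m : WithBot ℕ) ≤ x)
    (hk : (k : WithBot ℕ) ≤ y) : ((m + k : ℕ) : WithBot ℕ) ≤ x + y := by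
  simp only [Nat.cast_withBot] at *
  rw [WithBot.coe_add]
  exact add_le_add hm hk

lemma commute_pow : ∀ (i : ℕ) (a : K), ∃ r : S,
    R.D ^ i * R.ι a = R.ι a * R.D ^ i + r ∧ R.degD r < ((i : ℕ) : WithBot ℕ) := by
  intro i
  induction i with
  | zero =>
    intro a
    refine ⟨0, by rw [pow_zero, one_mul, mul_one, add_zero], ?_⟩
    rw [R.degD_eq_bot_iff.2 rfl, Nat.cast_withBot]
    exact WithBot.bot_lt_coe _
  | succ i ih =>
    intro a
    obtain ⟨r, hr, hdr⟩ := ih a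
    refine ⟨R.ι (δ a) * R.D ^ i + R.D * r, ?_, ?_⟩
    · rw [pow_succ', mul_assoc, hr, mul_add, ← mul_assoc, R.comm_rule, add_mul,
        mul_assoc, ← pow_succ', add_assoc]
    · refine lt_of_le_of_lt (R.degD_add_le _ _) (max_lt ?_ ?_)
      · refine lt_of_le_of_lt (R.degD_monomial_le _ _) ?_
        simp only [Nat.cast_withBot]
        exact WithBot.coe_lt_coe.2 (by omega)
      · refine lt_of_le_of_lt (R.degD_D_mul_le r) ?_
        have := wb_add_lt (i := i) (k := 1) hdr
        simpa using this

lemma mono_mul_mono (a b : K) (i k : ℕ) : ∃ r : S,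
    (R.ι a * R.D ^ i) * (R.ι b * R.D ^ k) = R.ι (a * b) * R.D ^ (i + k) + r ∧
      R.degD r < ((i + k : ℕ) : WithBot ℕ) := by
  obtain ⟨r₀, hr₀, hdr₀⟩ := R.commute_pow i b
  refine ⟨R.ι a * (r₀ * R.D ^ k), ?_, ?_⟩
  · calc (R.ι a * R.D ^ i) * (R.ι b * R.D ^ k)
        = R.ι a * ((R.D ^ i * R.ι b) * R.D ^ k) := by noncomm_ring
      _ = R.ι a * ((R.ι b * R.D ^ i + r₀) * R.D ^ k) := by rw [hr₀]
      _ = (R.ι a * R.ι b) * (R.D ^ i * R.D ^ k) + R.ι a * (r₀ * R.D ^ k) := by noncomm_ring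
      _ = R.ι (a * b) * R.D ^ (i + k) + R.ι a * (r₀ * R.D ^ k) := by
          rw [map_mul, pow_add]
  · refine lt_of_le_of_lt (R.degD_iota_mul_le _ _) ?_
    exact lt_of_le_of_lt (R.degD_mul_D_pow_le r₀ k) (wb_add_lt hdr₀)

lemma degD_mul_le (f g : S) : R.degD (f * g) ≤ R.degD f + R.degD g := by
  have hrepr : f * g = ∑ m ∈ R.supp f, ∑ k ∈ R.supp g,
      (R.ι (R.coeff f m) * R.D ^ m) * (R.ι (R.coeff g k) * R.D ^ k) := by
    conv_lhs => rw [R.repr_sum f, R.repr_sum g]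
    rw [Finset.sum_mul_sum]
  rw [hrepr]
  refine R.degD_sum_le _ _ (fun m hm => R.degD_sum_le _ _ (fun k hk => ?_))
  obtain ⟨r, hr, hdr⟩ := R.mono_mul_mono (R.coeff f m) (R.coeff g k) m k
  rw [hr]
  have hbound : ((m + k : ℕ) : WithBot ℕ) ≤ R.degD f + R.degD g :=
    wb_coe_add_le (by simpa only [Nat.cast_withBot] using R.le_degD_of_mem hm)
      (by simpa only [Nat.cast_withBot] using R.le_degD_of_mem hk)
  refine le_trans (R.degD_add_le _ _) (max_le ?_ ?_)
  · exact le_trans (R.degD_monomial_le (R.coeff f m * R.coeff g k) (m + k)) hbound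
  · exact le_trans (le_of_lt hdr) hbound

lemma coeff_mul_lead {f g : S} (hf : f ≠ 0) (hg : g ≠ 0) :
    R.coeff (f * g) (R.natDegD f + R.natDegD g) =
      R.coeff f (R.natDegD f) * R.coeff g (R.natDegD g) := by
  classical
  set df := R.natDegD f with hdf
  set dg := R.natDegD g with hdg
  have hrepr : f * g = ∑ m ∈ R.supp f, ∑ k ∈ R.supp g,
      (R.ι (R.coeff f m) * R.D ^ m) * (R.ι (R.coeff g k) * R.D ^ k) := by
    conv_lhs => rw [R.repr_sum f, R.repr_sum g]
    rw [Finset.sum_mul_sum]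
  rw [hrepr, R.coeff_sum]
  have hstep : ∀ m ∈ R.supp f,
      R.coeff (∑ k ∈ R.supp g, (R.ι (R.coeff f m) * R.D ^ m) * (R.ι (R.coeff g k) * R.D ^ k))
        (df + dg) =
      ∑ k ∈ R.supp g, (if df + dg = m + k then R.coeff f m * R.coeff g k else 0) := by
    intro m hm
    rw [R.coeff_sum]
    refine Finset.sum_congr rfl (fun k hk => ?_)
    obtain ⟨r, hr, hdr⟩ := R.mono_mul_mono (R.coeff f m) (R.coeff g k) m k
    have hmk : m + k ≤ df + dg := by
      have h1 := R.le_natDegD_of_mem hf hm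
      have h2 := R.le_natDegD_of_mem hg hk
      omega
    have hrz : R.coeff r (df + dg) = 0 := by
      refine R.coeff_eq_zero_of_lt (lt_of_lt_of_le hdr ?_)
      simp only [Nat.cast_withBot]
      exact WithBot.coe_le_coe.2 hmk
    rw [hr, R.coeff_add, hrz, add_zero, R.coeff_monomial]
  rw [Finset.sum_congr rfl hstep]
  rw [Finset.sum_eq_single_of_mem df (R.natDegD_mem_supp hf)]
  · rw [Finset.sum_eq_single_of_mem dg (R.natDegD_mem_supp hg)]
    · rw [if_pos rfl]
    · intro k hk hkne
      refine if_neg ?_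
      have := R.le_natDegD_of_mem hg hk
      omega
  · intro m hm hmne
    refine Finset.sum_eq_zero (fun k hk => if_neg ?_)
    have h1 := R.le_natDegD_of_mem hf hm
    have h2 := R.le_natDegD_of_mem hg hk
    omega

include R in
lemma mul_ne_zero' [IsDomain K] {f g : S} (hf : f ≠ 0) (hg : g ≠ 0) : f * g ≠ 0 := by
  intro hc
  have h := R.coeff_mul_lead hf hg
  rw [hc, R.coeff_zero] at h
  exact mul_ne_zero (R.leadCoeff_ne_zero hf) (R.leadCoeff_ne_zero hg) h.symm

lemma degD_mul [IsDomain K] {f g : S} (hf : f ≠ 0) (hg : g ≠ 0) :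
    R.degD (f * g) = R.degD f + R.degD g := by
  refine le_antisymm (R.degD_mul_le f g) ?_
  have h := R.coeff_mul_lead hf hg
  have hne : R.coeff (f * g) (R.natDegD f + R.natDegD g) ≠ 0 := by
    rw [h]; exact mul_ne_zero (R.leadCoeff_ne_zero hf) (R.leadCoeff_ne_zero hg)
  have hle := R.le_degD_of_mem ((R.mem_supp _ _).2 hne)
  rw [R.degD_eq_natDegD hf, R.degD_eq_natDegD hg]
  calc (↑(R.natDegD f) : WithBot ℕ) + ↑(R.natDegD g)
      = ((R.natDegD f + R.natDegD g : ℕ) : WithBot ℕ) := by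
        simp only [Nat.cast_withBot, WithBot.coe_add]
    _ ≤ R.degD (f * g) := by simpa only [Nat.cast_withBot] using hle

lemma natDegD_eq {f : S} {m : ℕ} (hm : R.degD f = ((m : ℕ) : WithBot ℕ)) :
    R.natDegD f = m := by
  rw [natDegD, hm, Nat.cast_withBot, WithBot.unbotD_coe]

lemma natDegD_mul [IsDomain K] {f g : S} (hf : f ≠ 0) (hg : g ≠ 0) :
    R.natDegD (f * g) = R.natDegD f + R.natDegD g := by
  refine R.natDegD_eq ?_
  rw [R.degD_mul hf hg, R.degD_eq_natDegD hf, R.degD_eq_natDegD hg]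
  simp only [Nat.cast_withBot, WithBot.coe_add]

lemma eq_one_of_monic_degD_zero {f : S} (hdeg : R.degD f = ((0 : ℕ) : WithBot ℕ))
    (hm : R.Monic f) : f = 1 := by
  have hf0 : f ≠ 0 := fun hc => by
    rw [R.degD_eq_bot_iff.2 hc, Nat.cast_withBot] at hdeg
    exact (WithBot.bot_ne_coe (a := (0:ℕ))) hdeg
  have hnat : R.natDegD f = 0 := R.natDegD_eq hdeg
  have hsupp : R.supp f = {0} := by
    refine Finset.eq_singleton_iff_unique_mem.2 ⟨?_, fun m hmm => ?_⟩
    · have := R.natDegD_mem_supp hf0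
      rwa [hnat] at this
    · have := R.le_natDegD_of_mem hf0 hmm
      omega
  have := R.repr_sum f
  rw [hsupp, Finset.sum_singleton, pow_zero, mul_one] at this
  rw [Monic, hnat] at hm
  rw [this, hm, map_one]

lemma supp_neg (f : S) : R.supp (-f) = R.supp f :=
  Finset.ext fun n => by rw [R.mem_supp, R.mem_supp, R.coeff_neg, neg_ne_zero]

lemma degD_neg (f : S) : R.degD (-f) = R.degD f := by rw [degD, degD, R.supp_neg]

lemma ne_zero_of_degD_coe {f : S} {m : ℕ} (hm : R.degD f = ((m : ℕ) : WithBot ℕ)) :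
    f ≠ 0 := fun hc => by
  rw [R.degD_eq_bot_iff.2 hc, Nat.cast_withBot] at hm
  exact (WithBot.bot_ne_coe (a := m)) hm


end DiffPolyRing


/-- if `P·A = G` where `G` is upper triangular with monic diagonal
entries of exactly the diagonal degrees `h` of the Hermite form `H` of `A`, and
off-diagonal degrees `< h j`, then `G = H` and `P` is unimodular. -/
theorem hermite_degree_equality_forces_hermite
    {F : Type} [Field F] [CharZero F] {S : Type} [Ring S]
    (δ : RatFunc F → RatFunc F)
    (hδadd : ∀ a b : RatFunc F, δ (a + b) = δ a + δ b)
    (hδmul : ∀ a b : RatFunc F, δ (a * b) = a * δ b + δ a * b)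
    (R : DiffPolyRing (RatFunc F) S δ) {n : ℕ}
    (A U H P G : Matrix (Fin n) (Fin n) S) (h : Fin n → ℕ)
    (hA : DiffPolyRing.FullRowRank A)
    (hU : IsUnit U) (hUA : U * A = H) (hH : R.HermiteForm H)
    (hdiag : ∀ i, R.degD (H i i) = (h i : WithBot ℕ))
    (hPA : P * A = G)
    (hGtri : ∀ i j, j < i → G i j = 0)
    (hGdiag : ∀ i, R.Monic (G i i) ∧ R.degD (G i i) = (h i : WithBot ℕ))
    (hGoff : ∀ i j, i < j → R.degD (G i j) < (h j : WithBot ℕ)) :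
    G = H ∧ IsUnit P := by
  classical
  obtain ⟨u, hu⟩ := hU
  set V : Matrix (Fin n) (Fin n) S := (u⁻¹ : (Matrix (Fin n) (Fin n) S)ˣ).val with hV
  have hVU : V * U = 1 := by rw [hV, ← hu]; exact u.inv_mul
  set Q : Matrix (Fin n) (Fin n) S := P * V with hQ
  have hQH : Q * H = G := by
    rw [hQ, ← hUA, ← hPA, Matrix.mul_assoc, ← Matrix.mul_assoc V U A, hVU, Matrix.one_mul]
  have hHne : ∀ j, H j j ≠ 0 := fun j => R.ne_zero_of_degD_coe (hdiag j)
  have hGne : ∀ j, G j j ≠ 0 := fun j => R.ne_zero_of_degD_coe (hGdiag j).2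
  have main : ∀ N : ℕ, ∀ j : Fin n, (j : ℕ) = N → ∀ i,
      Q i j = (1 : Matrix (Fin n) (Fin n) S) i j := by
    intro N
    induction N using Nat.strong_induction_on with
    | _ N IH =>
      intro j hjN i
      have IH' : ∀ k : Fin n, k < j → ∀ i', Q i' k = (1 : Matrix (Fin n) (Fin n) S) i' k :=
        fun k hk i' => IH (k : ℕ) (by rw [← hjN]; exact hk) k rfl i'
      have hGij : G i j = Q i j * H j j + (if i < j then H i j else 0) := by
        rw [← hQH, Matrix.mul_apply,
          Fintype.sum_eq_add_sum_compl j (fun k => Q i k * H k j)]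
        congr 1
        by_cases hij : i < j
        · rw [Finset.sum_eq_single_of_mem i
            (by rw [Finset.mem_compl, Finset.mem_singleton]; exact ne_of_lt hij)]
          · rw [IH' i hij i, Matrix.one_apply_eq, one_mul, if_pos hij]
          · intro k hk hkne
            have hkj : k ≠ j := by
              rw [Finset.mem_compl, Finset.mem_singleton] at hk; exact hk
            rcases lt_or_gt_of_ne hkj with hlt | hgt
            · rw [IH' k hlt i, Matrix.one_apply_ne (Ne.symm hkne), zero_mul]
            · rw [hH.1 k j hgt, mul_zero]
        · refine (Finset.sum_eq_zero (fun k hk => ?_)).trans (if_neg hij).symm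
          have hkj : k ≠ j := by
            rw [Finset.mem_compl, Finset.mem_singleton] at hk; exact hk
          rcases lt_or_gt_of_ne hkj with hlt | hgt
          · have hik : i ≠ k := fun hc => hij (hc ▸ hlt)
            rw [IH' k hlt i, Matrix.one_apply_ne hik, zero_mul]
          · rw [hH.1 k j hgt, mul_zero]
      rcases lt_trichotomy i j with hij | heq | hij
      · -- i < j : show Q i j = 0
        rw [if_pos hij] at hGij
        have e : Q i j * H j j = G i j - H i j := eq_sub_of_add_eq hGij.symm
        have hQ0 : Q i j = 0 := by
          by_contra hne
          have lb : ((h j : ℕ) : WithBot ℕ) ≤ R.degD (Q i j * H j j) := by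
            rw [R.degD_mul hne (hHne j), R.degD_eq_natDegD hne, hdiag j]
            simp only [Nat.cast_withBot, ← WithBot.coe_add]
            exact WithBot.coe_le_coe.2 (by omega)
          have ub : R.degD (G i j - H i j) < ((h j : ℕ) : WithBot ℕ) := by
            rw [sub_eq_add_neg]
            refine lt_of_le_of_lt (R.degD_add_le _ _) (max_lt (hGoff i j hij) ?_)
            rw [R.degD_neg]
            exact lt_of_lt_of_le (hH.2.2 i j hij) (le_of_eq (hdiag j))
          rw [e] at lb
          exact absurd (lt_of_le_of_lt lb ub) (lt_irrefl _)
        rw [hQ0, Matrix.one_apply_ne (ne_of_lt hij)]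
      · -- i = j : show Q j j = 1
        subst heq
        rw [if_neg (lt_irrefl i), add_zero] at hGij
        have hQne : Q i i ≠ 0 := fun hc => hGne i (by rw [hGij, hc, zero_mul])
        have hdq : R.natDegD (Q i i) = 0 := by
          have hd : R.degD (G i i) =
              ((R.natDegD (Q i i) : ℕ) : WithBot ℕ) + R.degD (H i i) := by
            rw [hGij, R.degD_mul hQne (hHne i), R.degD_eq_natDegD hQne]
          rw [(hGdiag i).2, hdiag i] at hd
          simp only [Nat.cast_withBot, ← WithBot.coe_add] at hd
          have := WithBot.coe_inj.1 hd
          omega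
        have hmon : R.Monic (Q i i) := by
          have hlead := R.coeff_mul_lead hQne (hHne i)
          have hnH : R.natDegD (H i i) = h i := R.natDegD_eq (hdiag i)
          have hnG : R.natDegD (G i i) = h i := R.natDegD_eq (hGdiag i).2
          have hmonH := hH.2.1 i
          rw [DiffPolyRing.Monic, hnH] at hmonH
          have hmonG := (hGdiag i).1
          rw [DiffPolyRing.Monic, hnG] at hmonG
          rw [hdq, hnH, zero_add, ← hGij, hmonG, hmonH, mul_one] at hlead
          rw [DiffPolyRing.Monic, hdq, hlead]
        have : Q i i = 1 := R.eq_one_of_monic_degD_zero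
          (by rw [R.degD_eq_natDegD hQne, hdq]) hmon
        rw [this, Matrix.one_apply_eq]
      · -- j < i : show Q i j = 0
        rw [if_neg (not_lt_of_gt hij), add_zero, hGtri i j hij] at hGij
        have hQ0 : Q i j = 0 := by
          by_contra hne
          exact R.mul_ne_zero' hne (hHne j) hGij.symm
        rw [hQ0, Matrix.one_apply_ne (ne_of_gt hij)]
  have hQ1 : Q = 1 := by
    ext i j
    exact main (j : ℕ) j rfl i
  constructor
  · rw [← hQH, hQ1, Matrix.one_mul]
  · have hPU : P = U := by
      calc P = P * (V * U) := by rw [hVU, Matrix.mul_one]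
        _ = Q * U := by rw [← Matrix.mul_assoc, ← hQ]
        _ = U := by rw [hQ1, Matrix.one_mul]
    rw [hPU]
    exact ⟨u, hu⟩
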